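/- Let B be a Noetherian integrally closed integral domain with field of fractions F, and let A be a subring of F containing B. Assume that every prime ideal 𝔭 of B of height one is the contraction of a prime ideal of A, i.e., there exists a prime ideal 𝔮 of A with 𝔮 ∩ B = 𝔭. Then A = B. -/
import Mathlib


def condIdeal (B : Type*) [CommRing B] [IsDomain B] (y : FractionRing B) : Ideal B where
  carrier := {d | ∃ c : B, y * algebraMap B (FractionRing B) d = algebraMap B (FractionRing B) c}
  zero_mem' := ⟨0, by simp⟩
  add_mem' := by
    rintro a b ⟨c1, h1⟩ ⟨c2, h2⟩
    exact ⟨c1 + c2, by rw [map_add, mul_add, h1, h2, map_add]⟩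
  smul_mem' := by
    rintro r a ⟨c, hc⟩
    refine ⟨r * c, ?_⟩
    rw [smul_eq_mul, map_mul, map_mul, ← hc]; ring

lemma mem_condIdeal {B : Type*} [CommRing B] [IsDomain B] {y : FractionRing B} {d : B} :
    d ∈ condIdeal B y ↔
      ∃ c : B, y * algebraMap B (FractionRing B) d = algebraMap B (FractionRing B) c :=
  Iff.rfl

/-- **Igusa's lemma, ring-theoretic form.** Let `B` be a Noetherian integrally closed
domain with fraction field `F`, and let `A` be a subring of `F` containing `B` (modelled
as a `B`-subalgebra of `F`). If every height-one prime ideal `𝔭` of `B` is the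
contraction of a prime ideal of `A`, then `A = B`. -/
theorem subalgebra_eq_bot_of_height_one_primes_lift
    (B : Type*) [CommRing B] [IsDomain B] [IsNoetherianRing B] [IsIntegrallyClosed B]
    (A : Subalgebra B (FractionRing B))
    (h : ∀ p : PrimeSpectrum B, Order.height p = 1 →
      ∃ q : Ideal A, q.IsPrime ∧ q.comap (algebraMap B A) = p.asIdeal) :
    A = ⊥ := by
  set K := FractionRing B with hK
  set f := algebraMap B K with hf
  have finj : Function.Injective f := IsFractionRing.injective B K
  by_contra hA
  -- there is an element of A not in the image of B
  have hex : ∃ x ∈ A, x ∉ Set.range f := by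
    by_contra hc
    push_neg at hc
    apply hA
    refine le_antisymm (fun x hx => ?_) bot_le
    rw [Algebra.mem_bot]
    exact hc x hx
  -- choose a maximal conductor ideal
  obtain ⟨x0, hx0A, hx0R⟩ := hex
  obtain ⟨p, ⟨x, ⟨hxA, hxR⟩, rfl⟩, hmax⟩ :=
    set_has_maximal_iff_noetherian.mpr (inferInstance : IsNoetherian B B)
      (condIdeal B '' {y | y ∈ A ∧ y ∉ Set.range f}) ⟨_, ⟨x0, ⟨hx0A, hx0R⟩, rfl⟩⟩
  set p := condIdeal B x with hp
  -- p is a proper, nonzero ideal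
  have hptop : p ≠ ⊤ := by
    intro ht
    have h1 : (1 : B) ∈ p := ht ▸ Submodule.mem_top
    obtain ⟨c, hc⟩ := mem_condIdeal.mp h1
    exact hxR ⟨c, by simpa using hc.symm⟩
  have hpbot : p ≠ ⊥ := by
    obtain ⟨⟨a, s⟩, hs⟩ := IsLocalization.surj (nonZeroDivisors B) x
    intro hb
    have : (s : B) ∈ p := ⟨a, hs⟩
    rw [hb, Submodule.mem_bot] at this
    exact nonZeroDivisors.coe_ne_zero s this
  -- p is prime
  have hprime : p.IsPrime := by
    refine ⟨hptop, ?_⟩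
    intro a b hab
    by_contra hcon
    push_neg at hcon
    obtain ⟨ha, hb⟩ := hcon
    -- consider b • x
    have hbxA : f b * x ∈ A := A.mul_mem (A.algebraMap_mem b) hxA
    have hbxR : f b * x ∉ Set.range f := by
      rintro ⟨c, hc⟩
      exact hb ⟨c, by rw [hc]; ring⟩
    have hle : p ≤ condIdeal B (f b * x) := by
      intro d ⟨c, hc⟩
      exact ⟨b * c, by rw [map_mul]; linear_combination (algebraMap B (FractionRing B)) b * hc⟩
    have heq : condIdeal B (f b * x) = p := by
      by_contra hne
      exact hmax _ ⟨f b * x, ⟨hbxA, hbxR⟩, rfl⟩ (lt_of_le_of_ne hle (Ne.symm hne))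
    apply ha
    rw [← heq, mem_condIdeal]
    obtain ⟨c, hc⟩ := mem_condIdeal.mp hab
    exact ⟨c, by rw [mul_comm (f b) x, mul_assoc, ← map_mul, mul_comm b a, hc]⟩
  -- there is d ∈ p with x * f d = f c and c ∉ p
  obtain ⟨d, hdp, c, hxdc, hcp⟩ :
      ∃ d ∈ p, ∃ c : B, x * f d = f c ∧ c ∉ p := by
    by_contra hcon
    push_neg at hcon
    -- then x stabilizes the image of p in K, so x is integral over B
    have hint : IsIntegral B x := by
      refine isIntegral_of_smul_mem_submodule
        (Submodule.map (Algebra.linearMap B K) p) ?_ ?_ x ?_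
      · intro hb
        apply hpbot
        rw [eq_bot_iff]
        intro d hd
        have : f d ∈ (⊥ : Submodule B K) := hb ▸ Submodule.mem_map_of_mem hd
        rw [Submodule.mem_bot] at this
        exact (Submodule.mem_bot B).mpr (finj (by simpa using this))
      · exact Submodule.FG.map _ (IsNoetherian.noetherian p)
      · rintro n ⟨d, hd, rfl⟩
        obtain ⟨c, hc⟩ := mem_condIdeal.mp hd
        have hcmem : c ∈ p := hcon d hd c hc
        have he : x • (Algebra.linearMap B K) d = (Algebra.linearMap B K) c := by
          simp only [Algebra.linearMap_apply, smul_eq_mul]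
          exact hc
        rw [he]
        exact Submodule.mem_map_of_mem hcmem
    obtain ⟨y, hy⟩ := IsIntegrallyClosed.isIntegral_iff.mp hint
    exact hxR ⟨y, hy⟩
  -- every prime strictly below p is ⊥
  have hkey : ∀ q : Ideal B, q.IsPrime → q < p → q = ⊥ := by
    intro q hq hqp
    have hdq : d ∉ q := by
      intro hdq
      apply hqp.ne
      refine le_antisymm hqp.le (fun y hy => ?_)
      obtain ⟨z, hz⟩ := mem_condIdeal.mp hy
      have hzd : z * d = y * c := finj (by
        simp only [map_mul]
        rw [← hz, ← hxdc]; ring)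
      have hyc : y * c ∈ q := hzd ▸ Ideal.mul_mem_left _ _ hdq
      rcases hq.mem_or_mem hyc with h1 | h1
      · exact h1
      · exact absurd (hqp.le h1) hcp
    refine eq_bot_iff.mpr fun y hy => ?_
    have key : ∀ n : ℕ, ∃ z ∈ q, y * c ^ n = z * d ^ n := by
      intro n
      induction n with
      | zero => exact ⟨y, hy, by simp⟩
      | succ n ih =>
        obtain ⟨z, hzq, hz2⟩ := ih
        obtain ⟨w, hw⟩ := mem_condIdeal.mp (hqp.le hzq)
        have hwd : w * d = z * c := finj (by
          simp only [map_mul]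
          rw [← hw, ← hxdc]; ring)
        have hwq : w ∈ q := by
          have hzc : w * d ∈ q := hwd ▸ Ideal.mul_mem_right _ _ hzq
          exact (hq.mem_or_mem hzc).resolve_right hdq
        refine ⟨w, hwq, ?_⟩
        calc y * c ^ (n + 1) = y * c ^ n * c := by ring
          _ = z * d ^ n * c := by rw [hz2]
          _ = (w * d) * d ^ n := by rw [hwd]; ring
          _ = w * d ^ (n + 1) := by ring
    -- localize at p to conclude y = 0
    letI L := Localization.AtPrime p
    haveI : IsNoetherianRing L :=
      IsLocalization.isNoetherianRing p.primeCompl L inferInstance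
    have hyL : algebraMap B L y = 0 := by
      have hmem : ∀ n : ℕ, algebraMap B L y ∈ IsLocalRing.maximalIdeal L ^ n := by
        intro n
        obtain ⟨z, hzq, hz2⟩ := key n
        have hdm : algebraMap B L d ∈ IsLocalRing.maximalIdeal L :=
          (IsLocalization.AtPrime.to_map_mem_maximal_iff L p d).mpr hdp
        have hmem' : algebraMap B L y * algebraMap B L c ^ n ∈
            IsLocalRing.maximalIdeal L ^ n := by
          rw [← map_pow, ← map_mul, hz2, map_mul, map_pow]
          exact Ideal.mul_mem_left _ _ (Ideal.pow_mem_pow hdm n)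
        have hcu : IsUnit (algebraMap B L c ^ n) :=
          ((IsLocalization.AtPrime.isUnit_to_map_iff L p c).mpr hcp).pow n
        rwa [mul_comm, Ideal.unit_mul_mem_iff_mem _ hcu] at hmem'
      have hbot : (⨅ n : ℕ, IsLocalRing.maximalIdeal L ^ n) = ⊥ :=
        Ideal.iInf_pow_eq_bot_of_isDomain (I := IsLocalRing.maximalIdeal L)
          (IsLocalRing.maximalIdeal.isMaximal L).ne_top
      have hin : algebraMap B L y ∈ (⊥ : Ideal L) := hbot ▸ Ideal.mem_iInf.mpr hmem
      simpa using hin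
    have ginj : Function.Injective (algebraMap B L) :=
      IsLocalization.injective L p.primeCompl_le_nonZeroDivisors
    exact (Submodule.mem_bot B).mpr (ginj (by simpa using hyL))
  -- p has height one
  have hht : Order.height (⟨p, hprime⟩ : PrimeSpectrum B) = 1 := by
    apply le_antisymm
    · apply Order.height_le
      intro s hs
      have hlen : s.length ≤ 1 := by
        by_contra hlen
        push_neg at hlen
        have h2 : 2 ≤ s.length := hlen
        set i0 : Fin (s.length + 1) := ⟨s.length - 2, by omega⟩ with hi0
        set i1 : Fin (s.length + 1) := ⟨s.length - 1, by omega⟩ with hi1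
        have h01 : s i0 < s i1 := s.strictMono (by simp [hi0, hi1, Fin.lt_def]; omega)
        have h1l : s i1 < s.last := by
          apply s.strictMono
          simp only [RelSeries.last, Fin.lt_def, hi1, Fin.last]
          omega
        rw [hs] at h1l
        have hq1 : (s i1).asIdeal < p := h1l
        have hq1b : (s i1).asIdeal = ⊥ := hkey _ (s i1).isPrime hq1
        have : (s i0).asIdeal < (s i1).asIdeal := h01
        rw [hq1b] at this
        exact not_lt_bot this
      exact_mod_cast hlen
    · rw [ENat.one_le_iff_ne_zero, Ne, Order.height_eq_zero]
      intro hmin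
      have hbot : (⟨⊥, Ideal.bot_prime⟩ : PrimeSpectrum B) ≤ ⟨p, hprime⟩ := bot_le
      have := hmin hbot
      have hple : p ≤ ⊥ := this
      exact hpbot (le_bot_iff.mp hple)
  -- lift p to a prime of A and derive a contradiction
  obtain ⟨q', hq', hq'c⟩ := h ⟨p, hprime⟩ hht
  have hdq' : algebraMap B A d ∈ q' := by
    have : d ∈ Ideal.comap (algebraMap B A) q' := by rw [hq'c]; exact hdp
    exact this
  have hxd : (⟨x, hxA⟩ : A) * algebraMap B A d = algebraMap B A c := by
    apply Subtype.ext
    show x * (algebraMap B A d : K) = (algebraMap B A c : K)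
    simpa using hxdc
  have hcq' : algebraMap B A c ∈ q' := hxd ▸ Ideal.mul_mem_left _ _ hdq'
  have : c ∈ Ideal.comap (algebraMap B A) q' := hcq'
  rw [hq'c] at this
  exact hcp this
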